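/- For every natural number s ≥ 1 and all natural numbers m and n, the sequence (A_n) satisfies A_{(2m+1)n} = Σ_{i=0}^{m} (-1)^{n(m+i)} · (s^2 + 4)^i · ((2m+1)/(2i+1)) · C(m+i, 2i) · A_n^{2i+1}, where the identity is understood as an equality of rational numbers (each coefficient ((2m+1)/(2i+1))·C(m+i,2i) is in fact an integer) and C(a,b) denotes the binomial coefficient. -/

import Mathlib

def aseq (s : ℕ) : ℕ → ℤ
  | 0 => 0
  | 1 => 1
  | n + 2 => s * aseq s (n + 1) + aseq s n

/-- Integer coefficients of the odd-index multiplication formula. -/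
def Dc (m i : ℕ) : ℕ := Nat.choose (m+i+1) (2*i+1) + Nat.choose (m+i) (2*i+1)

lemma pascal4 (n k : ℕ) :
    Nat.choose (n+4) (k+2) + Nat.choose (n+1) (k+2) =
    Nat.choose (n+3) (k+2) + Nat.choose (n+2) (k+2) + Nat.choose (n+2) k + Nat.choose (n+1) k := by
  have h1 : (n+4).choose (k+2) = (n+3).choose (k+1) + (n+3).choose (k+2) :=
    Nat.choose_succ_succ (n+3) (k+1)
  have h2 : (n+3).choose (k+1) = (n+2).choose k + (n+2).choose (k+1) :=
    Nat.choose_succ_succ (n+2) k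
  have h3 : (n+2).choose (k+1) = (n+1).choose k + (n+1).choose (k+1) :=
    Nat.choose_succ_succ (n+1) k
  have h4 : (n+2).choose (k+2) = (n+1).choose (k+1) + (n+1).choose (k+2) :=
    Nat.choose_succ_succ (n+1) (k+1)
  omega

lemma Dc_rec (m i : ℕ) : Dc (m+2) (i+1) + Dc m (i+1) = 2 * Dc (m+1) (i+1) + Dc (m+1) i := by
  have h := pascal4 (m+i) (2*i+1)
  simp only [Dc]
  rw [show m+2+(i+1)+1 = m+i+4 from by omega, show 2*(i+1)+1 = 2*i+1+2 from by omega,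
      show m+2+(i+1) = m+i+3 from by omega, show m+(i+1)+1 = m+i+2 from by omega,
      show m+(i+1) = m+i+1 from by omega, show m+1+(i+1)+1 = m+i+3 from by omega,
      show m+1+(i+1) = m+i+2 from by omega, show m+1+i+1 = m+i+2 from by omega,
      show m+1+i = m+i+1 from by omega]
  omega

lemma Dc_zero (m : ℕ) : Dc m 0 = 2*m+1 := by
  simp [Dc, Nat.choose_one_right]; omega

lemma Dc_big {m i : ℕ} (h : m < i) : Dc m i = 0 := by
  have h1 : m + i + 1 < 2*i+1 := by omega
  have h2 : m + i < 2*i+1 := by omega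
  simp [Dc, Nat.choose_eq_zero_of_lt, h1, h2]

/-- The key polynomial identity: `a^(2m+1) - b^(2m+1)` as a polynomial in
`a*b` and `a-b`. -/
lemma poly {R : Type*} [CommRing R] (a b : R) (m : ℕ) :
    a^(2*m+1) - b^(2*m+1) =
      ∑ i ∈ Finset.range (m+1), (Dc m i : R) * (a*b)^(m-i) * (a-b)^(2*i+1) := by
  induction m using Nat.twoStepInduction with
  | zero => norm_num [Dc, Finset.sum_range_succ]
  | one =>
      norm_num [Dc, Finset.sum_range_succ, Nat.choose]
      ring
  | more m ih1 ih2 =>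
      have key : a^(2*(m+2)+1) - b^(2*(m+2)+1)
          = ((a-b)^2 + 2*(a*b)) * (a^(2*(m+1)+1) - b^(2*(m+1)+1))
            - (a*b)^2 * (a^(2*m+1) - b^(2*m+1)) := by ring
      rw [key, ih1, ih2]
      set t : R := a - b with ht
      set q : R := a*b with hq
      have hT3 : ∑ i ∈ Finset.range (m+2+1), (Dc m i : R) * q^(m+2-i) * t^(2*i+1)
          = q^2 * ∑ i ∈ Finset.range (m+1), (Dc m i : R) * q^(m-i) * t^(2*i+1) := by
        rw [Finset.sum_range_succ, Finset.sum_range_succ,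
            Dc_big (by omega : m < m+1+1), Dc_big (by omega : m < m+1)]
        push_cast
        rw [zero_mul, zero_mul, zero_mul, zero_mul, add_zero, add_zero, Finset.mul_sum]
        refine Finset.sum_congr rfl fun i hi => ?_
        have hi' : i ≤ m := by simpa [Nat.lt_succ_iff] using hi
        rw [show m+2-i = 2+(m-i) from by omega, pow_add]
        ring
      have hT2 : ∑ i ∈ Finset.range (m+2+1), 2 * (Dc (m+1) i : R) * q^(m+2-i) * t^(2*i+1)
          = (2*q) * ∑ i ∈ Finset.range (m+2), (Dc (m+1) i : R) * q^(m+1-i) * t^(2*i+1) := by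
        rw [Finset.sum_range_succ, Dc_big (by omega : m+1 < m+2)]
        push_cast
        rw [mul_zero, zero_mul, zero_mul, add_zero, Finset.mul_sum]
        refine Finset.sum_congr rfl fun i hi => ?_
        have hi' : i ≤ m+1 := by simpa [Nat.lt_succ_iff] using hi
        rw [show m+2-i = 1+(m+1-i) from by omega, pow_add]
        ring
      have hT1 : ∑ i ∈ Finset.range (m+2+1),
              (if i = 0 then 0 else (Dc (m+1) (i-1) : R)) * q^(m+2-i) * t^(2*i+1)
          = t^2 * ∑ i ∈ Finset.range (m+2), (Dc (m+1) i : R) * q^(m+1-i) * t^(2*i+1) := by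
        rw [Finset.sum_range_succ' _ (m+2)]
        norm_num
        rw [Finset.mul_sum]
        refine Finset.sum_congr rfl fun i hi => ?_
        rw [show m+2-(i+1) = m+1-i from by omega, show 2*(i+1)+1 = (2*i+1)+2 from by omega,
            pow_add]
        ring
      have main : ∑ i ∈ Finset.range (m+2+1), (Dc (m+2) i : R) * q^(m+2-i) * t^(2*i+1)
            + ∑ i ∈ Finset.range (m+2+1), (Dc m i : R) * q^(m+2-i) * t^(2*i+1)
          = ∑ i ∈ Finset.range (m+2+1),
              (if i = 0 then 0 else (Dc (m+1) (i-1) : R)) * q^(m+2-i) * t^(2*i+1)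
            + ∑ i ∈ Finset.range (m+2+1), 2 * (Dc (m+1) i : R) * q^(m+2-i) * t^(2*i+1) := by
        rw [← Finset.sum_add_distrib, ← Finset.sum_add_distrib]
        refine Finset.sum_congr rfl fun i _ => ?_
        rcases i with _ | j
        · have h0 : (Dc (m+2) 0 + Dc m 0 : ℕ) = 0 + 2 * Dc (m+1) 0 := by
            rw [Dc_zero, Dc_zero, Dc_zero]; omega
          have h0' := congrArg (fun k : ℕ => (k : R)) h0
          push_cast at h0'
          norm_num
          linear_combination (q^(m+2) * t) * h0'
        · have h0 : (Dc (m+2) (j+1) + Dc m (j+1) : ℕ)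
              = Dc (m+1) j + 2 * Dc (m+1) (j+1) := by
            have := Dc_rec m j; omega
          have h0' := congrArg (fun k : ℕ => (k : R)) h0
          push_cast at h0'
          simp only [if_neg (Nat.succ_ne_zero j), Nat.add_sub_cancel]
          linear_combination (q^(m+2-(j+1)) * t^(2*(j+1)+1)) * h0'
      linear_combination hT3 - hT1 - hT2 - main

lemma aseq_add_two (s n : ℕ) : aseq s (n+2) = s * aseq s (n+1) + aseq s n := rfl

/-- `d = s^2 + 4`, the discriminant. -/
def dd (s : ℕ) : ℤ := (s:ℤ)^2 + 4

lemma upow (s : ℕ) : ∀ n : ℕ,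
    (((s:ℤ) : Zsqrtd (dd s)) + Zsqrtd.sqrtd)^n - (((s:ℤ) : Zsqrtd (dd s)) - Zsqrtd.sqrtd)^n
      = ((2^n * aseq s n : ℤ) : Zsqrtd (dd s)) * Zsqrtd.sqrtd := by
  set u : Zsqrtd (dd s) := ((s:ℤ) : Zsqrtd (dd s)) + Zsqrtd.sqrtd with hu
  set v : Zsqrtd (dd s) := ((s:ℤ) : Zsqrtd (dd s)) - Zsqrtd.sqrtd with hv
  have hd : (Zsqrtd.sqrtd : Zsqrtd (dd s))^2 = ((dd s : ℤ) : Zsqrtd (dd s)) := by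
    rw [sq, Zsqrtd.dmuld]
  have hdc : ((dd s : ℤ) : Zsqrtd (dd s)) = ((s:ℤ) : Zsqrtd (dd s))^2 + 4 := by
    rw [dd]; push_cast; ring
  have hu2 : u^2 = ((2*(s:ℤ) : ℤ) : Zsqrtd (dd s)) * u + 4 := by
    rw [hu]; push_cast
    linear_combination hd.trans hdc
  have hv2 : v^2 = ((2*(s:ℤ) : ℤ) : Zsqrtd (dd s)) * v + 4 := by
    rw [hv]; push_cast
    linear_combination hd.trans hdc
  intro n
  induction n using Nat.twoStepInduction with
  | zero => norm_num [aseq]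
  | one => rw [hu, hv]; norm_num [aseq]; ring
  | more n ih1 ih2 =>
      have hstep : u^(n+2) - v^(n+2)
          = ((2*(s:ℤ) : ℤ) : Zsqrtd (dd s)) * (u^(n+1) - v^(n+1)) + 4*(u^n - v^n) := by
        linear_combination (u^n) * hu2 - (v^n) * hv2
      rw [hstep, ih1, ih2, aseq_add_two]
      push_cast
      ring

lemma key (s m n : ℕ) : 2^((2*m+1)*n) * aseq s ((2*m+1)*n)
    = ∑ i ∈ Finset.range (m+1),
        (Dc m i : ℤ) * (-4)^(n*(m-i)) * (2^n * aseq s n)^(2*i+1) * (dd s)^i := by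
  set u : Zsqrtd (dd s) := ((s:ℤ) : Zsqrtd (dd s)) + Zsqrtd.sqrtd with hu
  set v : Zsqrtd (dd s) := ((s:ℤ) : Zsqrtd (dd s)) - Zsqrtd.sqrtd with hv
  have hd : (Zsqrtd.sqrtd : Zsqrtd (dd s))^2 = ((dd s : ℤ) : Zsqrtd (dd s)) := by
    rw [sq, Zsqrtd.dmuld]
  have huv : u * v = (((-4 : ℤ)) : Zsqrtd (dd s)) := by
    rw [hu, hv]
    have hdc : ((dd s : ℤ) : Zsqrtd (dd s)) = ((s:ℤ) : Zsqrtd (dd s))^2 + 4 := by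
      rw [dd]; push_cast; ring
    push_cast
    linear_combination - (hd.trans hdc)
  have hpoly := poly (R := Zsqrtd (dd s)) (u^n) (v^n) m
  rw [← pow_mul, ← pow_mul, show n*(2*m+1) = (2*m+1)*n from mul_comm _ _, upow s] at hpoly
  have hterm : ∀ i ∈ Finset.range (m+1),
      ((Dc m i : ℕ) : Zsqrtd (dd s)) * (u^n * v^n)^(m-i) * (u^n - v^n)^(2*i+1)
      = (((Dc m i : ℤ) * (-4)^(n*(m-i)) * (2^n * aseq s n)^(2*i+1) * (dd s)^i : ℤ)
          : Zsqrtd (dd s)) * Zsqrtd.sqrtd := by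
    intro i _
    have hsq : (Zsqrtd.sqrtd : Zsqrtd (dd s))^(2*i+1)
        = ((dd s : ℤ) : Zsqrtd (dd s))^i * Zsqrtd.sqrtd := by
      rw [pow_succ, pow_mul, hd]
    rw [← mul_pow, huv, upow s, mul_pow, hsq]
    push_cast
    ring
  rw [Finset.sum_congr rfl hterm, ← Finset.sum_mul, ← Int.cast_sum] at hpoly
  have imlem : ∀ x : ℤ, (((x : ℤ) : Zsqrtd (dd s)) * Zsqrtd.sqrtd).im = x := by
    intro x
    simp [Zsqrtd.im_mul, Zsqrtd.re_intCast, Zsqrtd.im_intCast,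
      Zsqrtd.re_sqrtd, Zsqrtd.im_sqrtd]
  have him := congrArg Zsqrtd.im hpoly
  rw [imlem, imlem] at him
  exact him

lemma coeff_eq (m i j : ℕ) (hj : m = i + j) :
    (2*m+1) * Nat.choose (m+i) (2*i) = (2*i+1) * Dc m i := by
  subst hj
  have h1 : (i+j+i+1) * Nat.choose (i+j+i) (2*i) = Nat.choose (i+j+i+1) (2*i+1) * (2*i+1) :=
    Nat.add_one_mul_choose_eq (i+j+i) (2*i)
  have h2 : Nat.choose (i+j+i) (2*i+1) * (2*i+1) = Nat.choose (i+j+i) (2*i) * (i+j+i-2*i) :=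
    Nat.choose_succ_right_eq (i+j+i) (2*i)
  rw [show i+j+i-2*i = j from by omega] at h2
  simp only [Dc]
  zify at h1 h2 ⊢
  rw [show (i+j)+i = i+j+i from rfl]
  linear_combination h1 - h2

theorem aseq_odd_mul (s : ℕ) (hs : 1 ≤ s) (m n : ℕ) :
    (aseq s ((2 * m + 1) * n) : ℚ) =
      ∑ i ∈ Finset.range (m + 1),
        (-1 : ℚ) ^ (n * (m + i)) * ((s : ℚ) ^ 2 + 4) ^ i * ((2 * m + 1 : ℚ) / (2 * i + 1)) *
          (Nat.choose (m + i) (2 * i) : ℚ) * (aseq s n : ℚ) ^ (2 * i + 1) := by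
  have hkey := congrArg (fun z : ℤ => (z : ℚ)) (key s m n)
  push_cast [dd] at hkey
  have h2 : ((2:ℚ))^((2*m+1)*n) ≠ 0 := by positivity
  apply mul_left_cancel₀ h2
  rw [hkey, Finset.mul_sum]
  refine Finset.sum_congr rfl fun i hi => ?_
  have hi' : i ≤ m := by simpa [Nat.lt_succ_iff] using hi
  obtain ⟨j, hj⟩ : ∃ j, m = i + j := ⟨m - i, by omega⟩
  have hc : ((2*m+1 : ℚ)/(2*i+1)) * (Nat.choose (m+i) (2*i) : ℚ) = (Dc m i : ℚ) := by
    have hnat := coeff_eq m i j hj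
    have hne : ((2*i+1 : ℚ)) ≠ 0 := by positivity
    rw [div_mul_eq_mul_div, div_eq_iff hne]
    push_cast
    have := congrArg (fun z : ℕ => (z : ℚ)) hnat
    push_cast at this
    linear_combination this
  have hp : ((-4:ℚ))^(n*(m-i)) * (2:ℚ)^(n*(2*i+1)) = (-1:ℚ)^(n*(m+i)) * (2:ℚ)^((2*m+1)*n) := by
    rw [show m-i = j from by omega, show m+i = 2*i+j from by omega,
        show 2*m+1 = 2*j+(2*i+1) from by omega,
        show (-4:ℚ) = (-1) * 2^2 from by norm_num, mul_pow, ← pow_mul,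
        show n*(2*i+j) = 2*(n*i) + n*j from by ring,
        show (2*j+(2*i+1))*n = (n*j)*2 + n*(2*i+1) from by ring,
        pow_add, pow_add, pow_mul]
    norm_num
    ring
  linear_combination ((Dc m i : ℚ) * (aseq s n : ℚ)^(2*i+1) * ((s:ℚ)^2+4)^i) * hp
    - ((2:ℚ)^((2*m+1)*n) * (-1:ℚ)^(n*(m+i)) * ((s:ℚ)^2+4)^i * (aseq s n : ℚ)^(2*i+1)) * hc
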